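/- Exactly 9 of the 48 vectors K in the box B₁ = {0,2}×{0,2}×{0,2}×{0,2}×{-1,1,3} ⊂ ℤ⁵ initiate a successful path for the matrix Q₁, namely (0,0,0,0,1), (0,0,0,0,-1), (2,0,0,0,1), (2,0,0,0,-1), (0,0,0,2,1), (0,0,0,2,-1), (0,0,0,0,3), (0,0,2,0,-1), and (0,2,0,0,-1). (By the Ozsváth–Szabó algorithm this computes the Heegaard Floer homology of the plumbed 3-manifold Y₁ = Σ(mirror of 8₂₀) and, since 9 = |H₁(Y₁;ℤ)|, shows that Y₁ is an L-space.) -/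

import Mathlib

open Matrix

/-- `K` initiates a successful path for the symmetric matrix `Q` (whose diagonal
entries play the role of the weights `mᵢ`): there is a finite sequence starting at `K`,
each step adding twice a column `Q·eᵢ` at an index `i` where the current vector has
`i`-th coordinate `-mᵢ = -(Q i i)`, ending at a vector `L` with
`Q i i ≤ L i ≤ -(Q i i) - 2` for all `i`. -/
def InitiatesSuccessfulPath {n : ℕ} (Q : Matrix (Fin n) (Fin n) ℤ) (K : Fin n → ℤ) : Prop :=
  ∃ (N : ℕ) (P : ℕ → Fin n → ℤ), P 0 = K ∧
    (∀ j < N, ∃ i : Fin n, P j i = -(Q i i) ∧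
      P (j + 1) = fun k => P j k + 2 * Q k i) ∧
    (∀ i : Fin n, Q i i ≤ P N i ∧ P N i ≤ -(Q i i) - 2)

/-- The intersection matrix `Q₁` of the plumbing tree `G₁`. -/
def Q1 : Matrix (Fin 5) (Fin 5) ℤ :=
  !![-2, 1, 0, 0, 0;
      1,-2, 1, 0, 1;
      0, 1,-2, 1, 0;
      0, 0, 1,-2, 0;
      0, 1, 0, 0,-3]

def BadL : List (Fin 5 → ℤ) := [
  ![-2,0,0,2,3],
  ![-2,0,2,-2,3],
  ![-2,0,2,0,3],
  ![-2,0,2,2,-1],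
  ![-2,0,2,2,1],
  ![-2,0,2,2,3],
  ![-2,2,-2,0,3],
  ![-2,2,-2,2,3],
  ![-2,2,0,-2,3],
  ![-2,2,0,0,3],
  ![-2,2,0,2,-3],
  ![-2,2,0,2,-1],
  ![-2,2,0,2,1],
  ![-2,2,0,2,3],
  ![-2,2,2,-2,-3],
  ![-2,2,2,-2,-1],
  ![-2,2,2,-2,1],
  ![-2,2,2,-2,3],
  ![-2,2,2,0,-3],
  ![-2,2,2,0,-1],
  ![-2,2,2,0,1],
  ![-2,2,2,0,3],
  ![-2,2,2,2,-3],
  ![-2,2,2,2,-1],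
  ![-2,2,2,2,1],
  ![-2,2,2,2,3],
  ![0,-2,2,2,-1],
  ![0,-2,2,2,1],
  ![0,-2,2,2,3],
  ![0,0,0,2,3],
  ![0,0,2,-2,3],
  ![0,0,2,0,1],
  ![0,0,2,0,3],
  ![0,0,2,2,-3],
  ![0,0,2,2,-1],
  ![0,0,2,2,1],
  ![0,0,2,2,3],
  ![0,2,-2,0,3],
  ![0,2,-2,2,1],
  ![0,2,-2,2,3],
  ![0,2,0,-2,1],
  ![0,2,0,-2,3],
  ![0,2,0,0,1],
  ![0,2,0,0,3],
  ![0,2,0,2,-3],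
  ![0,2,0,2,-1],
  ![0,2,0,2,1],
  ![0,2,0,2,3],
  ![0,2,2,-2,-3],
  ![0,2,2,-2,-1],
  ![0,2,2,-2,1],
  ![0,2,2,-2,3],
  ![0,2,2,0,-3],
  ![0,2,2,0,-1],
  ![0,2,2,0,1],
  ![0,2,2,0,3],
  ![0,2,2,2,-3],
  ![0,2,2,2,-1],
  ![0,2,2,2,1],
  ![0,2,2,2,3],
  ![2,-2,0,2,3],
  ![2,-2,2,-2,3],
  ![2,-2,2,0,3],
  ![2,-2,2,2,-1],
  ![2,-2,2,2,1],
  ![2,-2,2,2,3],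
  ![2,0,-2,0,3],
  ![2,0,-2,2,3],
  ![2,0,0,-2,3],
  ![2,0,0,0,3],
  ![2,0,0,2,-3],
  ![2,0,0,2,-1],
  ![2,0,0,2,1],
  ![2,0,0,2,3],
  ![2,0,2,-2,-3],
  ![2,0,2,-2,-1],
  ![2,0,2,-2,1],
  ![2,0,2,-2,3],
  ![2,0,2,0,-3],
  ![2,0,2,0,-1],
  ![2,0,2,0,1],
  ![2,0,2,0,3],
  ![2,0,2,2,-3],
  ![2,0,2,2,-1],
  ![2,0,2,2,1],
  ![2,0,2,2,3],
  ![2,2,-2,0,-3],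
  ![2,2,-2,0,-1],
  ![2,2,-2,0,1],
  ![2,2,-2,0,3],
  ![2,2,-2,2,-3],
  ![2,2,-2,2,-1],
  ![2,2,-2,2,1],
  ![2,2,-2,2,3],
  ![2,2,0,-2,-3],
  ![2,2,0,-2,-1],
  ![2,2,0,-2,1],
  ![2,2,0,-2,3],
  ![2,2,0,0,-3],
  ![2,2,0,0,-1],
  ![2,2,0,0,1],
  ![2,2,0,0,3],
  ![2,2,0,2,-3],
  ![2,2,0,2,-1],
  ![2,2,0,2,1],
  ![2,2,0,2,3],
  ![2,2,2,-2,-3],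
  ![2,2,2,-2,-1],
  ![2,2,2,-2,1],
  ![2,2,2,-2,3],
  ![2,2,2,0,-3],
  ![2,2,2,0,-1],
  ![2,2,2,0,1],
  ![2,2,2,0,3],
  ![2,2,2,2,-3],
  ![2,2,2,2,-1],
  ![2,2,2,2,1],
  ![2,2,2,2,3]
]

abbrev Dead (x : Fin 5 → ℤ) : Prop := (∃ i, -(Q1 i i) < x i) ∨ x ∈ BadL
lemma good0 : InitiatesSuccessfulPath Q1 ![0,0,0,0,1] := by
  refine ⟨0, fun j => ([![0,0,0,0,1]].getD j ![0,0,0,0,0]), by decide, by decide, by decide⟩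

lemma good1 : InitiatesSuccessfulPath Q1 ![0,0,0,0,-1] := by
  refine ⟨0, fun j => ([![0,0,0,0,-1]].getD j ![0,0,0,0,0]), by decide, by decide, by decide⟩

lemma good2 : InitiatesSuccessfulPath Q1 ![2,0,0,0,1] := by
  refine ⟨9, fun j => ([![2,0,0,0,1], ![-2,2,0,0,1], ![0,-2,2,0,3], ![0,0,-2,2,3], ![0,0,0,-2,3], ![0,2,0,-2,-3], ![2,-2,2,-2,-1], ![-2,0,2,-2,-1], ![-2,2,-2,0,-1], ![0,-2,0,0,1]].getD j ![0,0,0,0,0]), by decide, by decide, by decide⟩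

lemma good3 : InitiatesSuccessfulPath Q1 ![2,0,0,0,-1] := by
  refine ⟨4, fun j => ([![2,0,0,0,-1], ![-2,2,0,0,-1], ![0,-2,2,0,1], ![0,0,-2,2,1], ![0,0,0,-2,1]].getD j ![0,0,0,0,0]), by decide, by decide, by decide⟩

lemma good4 : InitiatesSuccessfulPath Q1 ![0,0,0,2,1] := by
  refine ⟨8, fun j => ([![0,0,0,2,1], ![0,0,2,-2,1], ![0,2,-2,0,1], ![2,-2,0,0,3], ![-2,0,0,0,3], ![-2,2,0,0,-3], ![0,-2,2,0,-1], ![0,0,-2,2,-1], ![0,0,0,-2,-1]].getD j ![0,0,0,0,0]), by decide, by decide, by decide⟩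

lemma good5 : InitiatesSuccessfulPath Q1 ![0,0,0,2,-1] := by
  refine ⟨4, fun j => ([![0,0,0,2,-1], ![0,0,2,-2,-1], ![0,2,-2,0,-1], ![2,-2,0,0,1], ![-2,0,0,0,1]].getD j ![0,0,0,0,0]), by decide, by decide, by decide⟩

lemma good6 : InitiatesSuccessfulPath Q1 ![0,0,0,0,3] := by
  refine ⟨7, fun j => ([![0,0,0,0,3], ![0,2,0,0,-3], ![2,-2,2,0,-1], ![-2,0,2,0,-1], ![-2,2,-2,2,-1], ![0,-2,0,2,1], ![0,-2,2,-2,1], ![0,0,-2,0,1]].getD j ![0,0,0,0,0]), by decide, by decide, by decide⟩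

lemma good7 : InitiatesSuccessfulPath Q1 ![0,0,2,0,-1] := by
  refine ⟨7, fun j => ([![0,0,2,0,-1], ![0,2,-2,2,-1], ![2,-2,0,2,1], ![-2,0,0,2,1], ![-2,0,2,-2,1], ![-2,2,-2,0,1], ![0,-2,0,0,3], ![0,0,0,0,-3]].getD j ![0,0,0,0,0]), by decide, by decide, by decide⟩

lemma good8 : InitiatesSuccessfulPath Q1 ![0,2,0,0,-1] := by
  refine ⟨9, fun j => ([![0,2,0,0,-1], ![2,-2,2,0,1], ![-2,0,2,0,1], ![-2,2,-2,2,1], ![0,-2,0,2,3], ![0,-2,2,-2,3], ![0,0,-2,0,3], ![0,2,-2,0,-3], ![2,-2,0,0,-1], ![-2,0,0,0,-1]].getD j ![0,0,0,0,0]), by decide, by decide, by decide⟩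

set_option maxRecDepth 10000
lemma q1_offdiag_nonneg : ∀ j i : Fin 5, j ≠ i → 0 ≤ Q1 j i := by
  intro j i h; fin_cases j <;> fin_cases i <;> simp [Q1] at h ⊢

lemma badl_not_success : ∀ x ∈ BadL, ¬ ∀ i : Fin 5, Q1 i i ≤ x i ∧ x i ≤ -(Q1 i i) - 2 := by
  decide

lemma badl_closed : ∀ x ∈ BadL, ∀ i : Fin 5, x i = -(Q1 i i) →
    Dead (fun k => x k + 2 * Q1 k i) := by decide

lemma dead_not_success {x : Fin 5 → ℤ} (hx : Dead x) :
    ¬ ∀ i : Fin 5, Q1 i i ≤ x i ∧ x i ≤ -(Q1 i i) - 2 := by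
  rcases hx with ⟨i, hi⟩ | hmem
  · intro h; obtain ⟨_, h2⟩ := h i; omega
  · exact badl_not_success x hmem

lemma dead_closed {x : Fin 5 → ℤ} (hx : Dead x) {i : Fin 5} (hi : x i = -(Q1 i i)) :
    Dead (fun k => x k + 2 * Q1 k i) := by
  rcases hx with ⟨j, hj⟩ | hmem
  · left
    refine ⟨j, ?_⟩
    have hji : j ≠ i := by rintro rfl; omega
    have := q1_offdiag_nonneg j i hji
    simp only
    omega
  · exact badl_closed x hmem i hi

lemma no_path_of_dead {K : Fin 5 → ℤ} (hK : Dead K) : ¬ InitiatesSuccessfulPath Q1 K := by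
  rintro ⟨N, P, hP0, hstep, hfin⟩
  have hD : ∀ j, j ≤ N → Dead (P j) := by
    intro j
    induction j with
    | zero => intro _; rw [hP0]; exact hK
    | succ j ih =>
      intro hj
      obtain ⟨i, hi, heq⟩ := hstep j (by omega)
      rw [heq]
      exact dead_closed (ih (by omega)) hi
  exact dead_not_success (hD N le_rfl) hfin


set_option maxHeartbeats 2000000 in
/-- Exactly 9 of the 48 vectors in the box `{0,2}⁴ × {-1,1,3}` initiate a successful
path for `Q₁`, namely the nine listed vectors. -/
theorem successful_vectors_Q1 (K : Fin 5 → ℤ)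
    (h0 : K 0 = 0 ∨ K 0 = 2) (h1 : K 1 = 0 ∨ K 1 = 2)
    (h2 : K 2 = 0 ∨ K 2 = 2) (h3 : K 3 = 0 ∨ K 3 = 2)
    (h4 : K 4 = -1 ∨ K 4 = 1 ∨ K 4 = 3) :
    InitiatesSuccessfulPath Q1 K ↔
      K = ![0,0,0,0,1] ∨ K = ![0,0,0,0,-1] ∨ K = ![2,0,0,0,1] ∨
      K = ![2,0,0,0,-1] ∨ K = ![0,0,0,2,1] ∨ K = ![0,0,0,2,-1] ∨
      K = ![0,0,0,0,3] ∨ K = ![0,0,2,0,-1] ∨ K = ![0,2,0,0,-1] := by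
  have hK : K = ![K 0, K 1, K 2, K 3, K 4] := by
    funext i; fin_cases i <;> rfl
  rcases h0 with h0 | h0 <;> rcases h1 with h1 | h1 <;> rcases h2 with h2 | h2 <;>
    rcases h3 with h3 | h3 <;> rcases h4 with h4 | h4 | h4 <;>
    rw [h0, h1, h2, h3, h4] at hK <;> rw [hK] <;>
    first
      | exact iff_of_true good0 (by decide)
      | exact iff_of_true good1 (by decide)
      | exact iff_of_true good2 (by decide)
      | exact iff_of_true good3 (by decide)
      | exact iff_of_true good4 (by decide)
      | exact iff_of_true good5 (by decide)
      | exact iff_of_true good6 (by decide)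
      | exact iff_of_true good7 (by decide)
      | exact iff_of_true good8 (by decide)
      | exact iff_of_false (no_path_of_dead (by decide)) (by decide)
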